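/- Let P be a monic complex polynomial of degree m ≥ 1 with roots r₁,...,r_m (with multiplicity), and define T_{l,j} = Σ r_{s₁}···r_{s_l} summed over all l-element subsets {s₁,...,s_l} of {1,...,m} containing j (with T_{0,j} = 1). Define S_l(x) = Σ_{j=1}^m T_{l,j} e^{-i r_j x}. Then each S_l is an entire function whose Taylor coefficient b_k at 0 satisfies: k! b_k lies in the ring ℤ[i, a₀, a₁, ..., a_{m-1}] generated by i and the coefficients of P. -/

import Mathlib

theorem gen_trig_taylor_coeffs (m : ℕ) (hm : 1 ≤ m) (r : Fin m → ℂ) (a : ℕ → ℂ)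
    (hP : ∀ x : ℂ, ∏ j, (x - r j) = x ^ m + ∑ i ∈ Finset.range m, a i * x ^ i)
    (T : ℕ → Fin m → ℂ)
    (hT0 : ∀ j, T 0 j = 1)
    (hT : ∀ l, 1 ≤ l → ∀ j, T l j =
      ∑ s ∈ Finset.univ.powersetCard l with j ∈ s, ∏ i ∈ s, r i)
    (S : ℕ → ℂ → ℂ)
    (hS : ∀ l x, S l x = ∑ j, T l j * Complex.exp (-Complex.I * r j * x)) :
    ∀ l, l ≤ m - 1 →
      (Differentiable ℂ (S l) ∧ AnalyticOn ℂ (S l) Set.univ) ∧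
      ∀ k : ℕ, iteratedDeriv k (S l) 0 ∈
        Subring.closure (insert Complex.I (a '' Set.Iio m)) := by
  classical
  set R := Subring.closure (insert Complex.I (a '' Set.Iio m)) with hRdef
  set p : ℕ → ℂ := fun k => ∑ j, r j ^ k with hpdef
  set e : ℕ → ℂ := fun d => ∑ s ∈ Finset.univ.powersetCard d, ∏ i ∈ s, r i with hedef
  -- The polynomial identity
  set Q : Polynomial ℂ := ∏ j, (Polynomial.X - Polynomial.C (r j)) with hQdef
  have hQ : Q = Polynomial.X ^ m +
      ∑ i ∈ Finset.range m, Polynomial.C (a i) * Polynomial.X ^ i := by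
    apply Polynomial.funext
    intro x
    rw [hQdef]
    simp only [Polynomial.eval_prod, Polynomial.eval_sub, Polynomial.eval_X,
      Polynomial.eval_C, Polynomial.eval_add, Polynomial.eval_pow,
      Polynomial.eval_finset_sum, Polynomial.eval_mul]
    exact hP x
  -- Multiset form of Q
  have hQm : Q = ((Finset.univ.val.map r).map fun t =>
      Polynomial.X - Polynomial.C t).prod := by
    rw [hQdef, Finset.prod_eq_multiset_prod, Multiset.map_map]
    rfl
  have hcard : Multiset.card (Finset.univ.val.map r) = m := by
    simp
  -- e d in terms of coefficients of P
  have he_mem : ∀ d, e d ∈ R := by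
    intro d
    rcases Nat.eq_zero_or_pos d with h0 | hd1
    · subst h0
      have : e 0 = 1 := by simp [hedef]
      rw [this]; exact one_mem R
    rcases le_or_gt d m with hdm | hdm
    · -- 1 ≤ d ≤ m : e d = (-1)^d * a (m-d)
      have hesymm : (Finset.univ.val.map r).esymm d = e d := by
        rw [Finset.esymm_map_val]
      have hcoeff1 : Q.coeff (m - d) = (-1) ^ d * e d := by
        rw [hQm]
        have hle : m - d ≤ Multiset.card (Finset.univ.val.map r) := by rw [hcard]; omega
        rw [Multiset.prod_X_sub_C_coeff _ hle, hcard, Nat.sub_sub_self hdm, hesymm]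
      have hcoeff2 : Q.coeff (m - d) = a (m - d) := by
        rw [hQ]
        have hlt : m - d < m := by omega
        rw [Polynomial.coeff_add, Polynomial.coeff_X_pow, if_neg (by omega),
          Polynomial.finset_sum_coeff]
        simp only [Polynomial.coeff_C_mul, Polynomial.coeff_X_pow]
        rw [Finset.sum_congr rfl (fun i _ => by rw [mul_ite, mul_one, mul_zero]),
          Finset.sum_ite_eq (Finset.range m) (m - d) a, if_pos (Finset.mem_range.mpr hlt)]
        ring
      have hsq : ((-1 : ℂ) ^ d) * ((-1 : ℂ) ^ d) = 1 := by
        rw [← pow_add, ← two_mul, pow_mul]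
        norm_num
      have hed : e d = (-1) ^ d * a (m - d) := by
        rw [← hcoeff2, hcoeff1, ← mul_assoc, hsq, one_mul]
      rw [hed]
      exact mul_mem (pow_mem (neg_mem (one_mem R)) d)
        (Subring.subset_closure (Set.mem_insert_iff.mpr (Or.inr ⟨m - d, Set.mem_Iio.mpr (by omega), rfl⟩)))
    · -- d > m : e d = 0
      have : e d = 0 := by
        show (∑ s ∈ Finset.univ.powersetCard d, ∏ i ∈ s, r i) = 0
        rw [Finset.powersetCard_eq_empty.mpr (by simpa using hdm)]
        simp
      rw [this]; exact zero_mem R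
  -- evaluation bridges
  have heval_esymm : ∀ d, MvPolynomial.eval r (MvPolynomial.esymm (Fin m) ℂ d) = e d := by
    intro d
    simp [MvPolynomial.esymm, map_sum, map_prod, hedef]
  have heval_psum : ∀ k, MvPolynomial.eval r (MvPolynomial.psum (Fin m) ℂ k) = p k := by
    intro k
    simp [MvPolynomial.psum, map_sum, hpdef]
  -- Newton's identities, evaluated
  have hnewton : ∀ k, 0 < k → p k = (-1) ^ (k + 1) * k * e k -
      ∑ c ∈ Finset.HasAntidiagonal.antidiagonal k with c.1 ∈ Set.Ioo 0 k,
        (-1) ^ c.1 * e c.1 * p c.2 := by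
    intro k hk
    have h := congrArg (MvPolynomial.eval r)
      (MvPolynomial.psum_eq_mul_esymm_sub_sum (Fin m) ℂ k hk)
    simpa [map_sub, map_mul, map_pow, map_sum, map_neg, map_one, map_natCast,
      heval_esymm, heval_psum] using h
  -- power sums are in R
  have hp_mem : ∀ k, p k ∈ R := by
    intro k
    induction k using Nat.strong_induction_on with
    | _ k ih =>
      rcases Nat.eq_zero_or_pos k with h0 | hk
      · subst h0
        have : p 0 = (m : ℂ) := by simp [hpdef]
        rw [this]; exact natCast_mem R m
      · rw [hnewton k hk]
        refine sub_mem (mul_mem (mul_mem (pow_mem (neg_mem (one_mem R)) _)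
          (natCast_mem R k)) (he_mem k)) (sum_mem fun c hc => ?_)
        rw [Finset.mem_filter] at hc
        have h1 := Finset.HasAntidiagonal.mem_antidiagonal.mp hc.1
        have h2 : 0 < c.1 := hc.2.1
        exact mul_mem (mul_mem (pow_mem (neg_mem (one_mem R)) _) (he_mem c.1))
          (ih c.2 (by omega))
  -- the key combinatorial bijection
  have key : ∀ (l : ℕ) (j : Fin m),
      (∑ s ∈ Finset.univ.powersetCard (l + 1) with j ∈ s, ∏ i ∈ s, r i) =
      r j * ∑ t ∈ Finset.univ.powersetCard l with j ∉ t, ∏ i ∈ t, r i := by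
    intro l j
    rw [Finset.mul_sum]
    refine (Finset.sum_nbij' (fun t => insert j t) (fun s => s.erase j)
      ?_ ?_ ?_ ?_ ?_).symm
    · intro t ht
      rw [Finset.mem_filter, Finset.mem_powersetCard_univ] at ht ⊢
      exact ⟨by rw [Finset.card_insert_of_notMem ht.2, ht.1], Finset.mem_insert_self j t⟩
    · intro s hs
      rw [Finset.mem_filter, Finset.mem_powersetCard_univ] at hs ⊢
      exact ⟨by rw [Finset.card_erase_of_mem hs.2, hs.1]; omega, Finset.notMem_erase j s⟩
    · intro t ht
      rw [Finset.mem_filter] at ht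
      exact Finset.erase_insert ht.2
    · intro s hs
      rw [Finset.mem_filter] at hs
      exact Finset.insert_erase hs.2
    · intro t ht
      rw [Finset.mem_filter] at ht
      rw [Finset.prod_insert ht.2]
  -- the main sums are in R
  have hD : ∀ (l k : ℕ),
      (∑ j, (∑ s ∈ Finset.univ.powersetCard l with j ∈ s, ∏ i ∈ s, r i) * r j ^ k) ∈ R := by
    intro l
    induction l with
    | zero =>
      intro k
      have : ∀ j : Fin m,
          (∑ s ∈ Finset.univ.powersetCard 0 with j ∈ s, ∏ i ∈ s, r i) * r j ^ k = 0 := by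
        intro j
        rw [Finset.powersetCard_zero, Finset.filter_singleton,
          if_neg (Finset.notMem_empty j)]
        simp
      rw [Finset.sum_congr rfl fun j _ => this j]
      simp only [Finset.sum_const_zero]
      exact zero_mem R
    | succ l ih =>
      intro k
      have step : ∀ j : Fin m,
          (∑ s ∈ Finset.univ.powersetCard (l + 1) with j ∈ s, ∏ i ∈ s, r i) * r j ^ k =
          e l * r j ^ (k + 1) -
            (∑ t ∈ Finset.univ.powersetCard l with j ∈ t, ∏ i ∈ t, r i) * r j ^ (k + 1) := by
        intro j
        rw [key l j]
        have hsplit := Finset.sum_filter_add_sum_filter_not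
          (Finset.univ.powersetCard l) (fun t => j ∈ t) (fun t => ∏ i ∈ t, r i)
        have : (∑ t ∈ Finset.univ.powersetCard l with j ∉ t, ∏ i ∈ t, r i) =
            e l - ∑ t ∈ Finset.univ.powersetCard l with j ∈ t, ∏ i ∈ t, r i := by
          rw [hedef]
          simp only at hsplit ⊢
          linear_combination hsplit
        rw [this]
        ring
      rw [Finset.sum_congr rfl (fun j _ => step j), Finset.sum_sub_distrib, ← Finset.mul_sum]
      exact sub_mem (mul_mem (he_mem l)
        (show (∑ j, r j ^ (k + 1)) ∈ R from hp_mem (k + 1))) (ih (k + 1))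
  -- the T-weighted sums are in R
  have hTsum : ∀ (l k : ℕ), (∑ j, T l j * r j ^ k) ∈ R := by
    intro l k
    rcases Nat.eq_zero_or_pos l with h0 | hl
    · subst h0
      have : (∑ j, T 0 j * r j ^ k) = p k := by
        rw [hpdef]
        exact Finset.sum_congr rfl fun j _ => by rw [hT0 j, one_mul]
      rw [this]; exact hp_mem k
    · have : (∑ j, T l j * r j ^ k) =
          ∑ j, (∑ s ∈ Finset.univ.powersetCard l with j ∈ s, ∏ i ∈ s, r i) * r j ^ k :=
        Finset.sum_congr rfl fun j _ => by rw [hT l hl j]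
      rw [this]; exact hD l k
  -- derivative formula
  have hderiv : ∀ (l k : ℕ), iteratedDeriv k (S l) =
      fun x => ∑ j, T l j * (-Complex.I * r j) ^ k * Complex.exp (-Complex.I * r j * x) := by
    intro l k
    induction k with
    | zero =>
      funext x
      rw [iteratedDeriv_zero, hS l x]
      simp
    | succ k ih =>
      rw [iteratedDeriv_succ, ih]
      funext x
      have H : ∀ j : Fin m, HasDerivAt
          (fun y => T l j * (-Complex.I * r j) ^ k * Complex.exp (-Complex.I * r j * y))
          (T l j * (-Complex.I * r j) ^ (k + 1) * Complex.exp (-Complex.I * r j * x)) x := by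
        intro j
        have h1 : HasDerivAt (fun y : ℂ => Complex.exp (-Complex.I * r j * y))
            (Complex.exp (-Complex.I * r j * x) * (-Complex.I * r j)) x := by
          simpa using ((hasDerivAt_id x).const_mul (-Complex.I * r j)).cexp
        have h2 := h1.const_mul (T l j * (-Complex.I * r j) ^ k)
        exact h2.congr_deriv (by ring)
      rw [(HasDerivAt.fun_sum fun j _ => H j).deriv]
  -- differentiability
  have hdiff : ∀ l, Differentiable ℂ (S l) := by
    intro l
    have : S l = fun x => ∑ j, T l j * Complex.exp (-Complex.I * r j * x) :=
      funext (hS l)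
    rw [this]
    exact Differentiable.fun_sum fun j _ =>
      ((differentiable_id.const_mul (-Complex.I * r j)).cexp).const_mul (T l j)
  intro l _
  refine ⟨⟨hdiff l, ((hdiff l).differentiableOn).analyticOn isOpen_univ⟩, ?_⟩
  intro k
  rw [hderiv l k]
  show (∑ j, T l j * (-Complex.I * r j) ^ k * Complex.exp (-Complex.I * r j * 0)) ∈ R
  have : (∑ j, T l j * (-Complex.I * r j) ^ k * Complex.exp (-Complex.I * r j * 0)) =
      (-Complex.I) ^ k * ∑ j, T l j * r j ^ k := by
    rw [Finset.mul_sum]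
    refine Finset.sum_congr rfl fun j _ => ?_
    rw [mul_zero, Complex.exp_zero, mul_one, mul_pow]
    ring
  rw [this]
  exact mul_mem (pow_mem (neg_mem (Subring.subset_closure (Set.mem_insert _ _))) k)
    (hTsum l k)
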